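/- Let z be a real random variable distributed as a Gaussian N(μ, σ²) with mean μ ∈ ℝ and variance σ² > 0, and let Φ denote the standard normal cumulative distribution function, Φ(z) = ∫_{-∞}^z (2π)^{-1/2} exp(-t²/2) dt. Then E[Φ(z)] = Φ(μ / √(1 + σ²)). -/

import Mathlib

open MeasureTheory ProbabilityTheory Real Set
open scoped ENNReal NNReal

/-- The standard normal cumulative distribution function
`Φ(z) = ∫_{-∞}^z (2π)^{-1/2} exp(-t²/2) dt`. -/
noncomputable def stdNormalCDF (z : ℝ) : ℝ :=
  ∫ t in Set.Iic z, (Real.sqrt (2 * Real.pi))⁻¹ * Real.exp (-t ^ 2 / 2)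

lemma stdPDF_eq : (fun t : ℝ => (Real.sqrt (2 * Real.pi))⁻¹ * Real.exp (-t ^ 2 / 2))
    = gaussianPDFReal 0 1 := by
  ext t
  simp [gaussianPDFReal]

lemma stdPDF_integrable :
    Integrable (fun t : ℝ => (Real.sqrt (2 * Real.pi))⁻¹ * Real.exp (-t ^ 2 / 2)) := by
  rw [stdPDF_eq]; exact integrable_gaussianPDFReal 0 1

lemma stdPDF_nonneg (t : ℝ) : 0 ≤ (Real.sqrt (2 * Real.pi))⁻¹ * Real.exp (-t ^ 2 / 2) := by
  positivity

lemma stdPDF_measurable :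
    Measurable (fun t : ℝ => (Real.sqrt (2 * Real.pi))⁻¹ * Real.exp (-t ^ 2 / 2)) := by
  fun_prop

lemma stdNormalCDF_nonneg (z : ℝ) : 0 ≤ stdNormalCDF z :=
  integral_nonneg fun t => stdPDF_nonneg t

lemma stdNormalCDF_monotone : Monotone stdNormalCDF := fun x y hxy => by
  apply setIntegral_mono_set stdPDF_integrable.restrict
    (ae_of_all _ fun t => stdPDF_nonneg t) (HasSubset.Subset.eventuallyLE (Iic_subset_Iic.2 hxy))

lemma stdNormalCDF_eq_measure (z : ℝ) :
    stdNormalCDF z = ((gaussianReal 0 1) (Iic z)).toReal := by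
  rw [gaussianReal_apply_eq_integral 0 one_ne_zero, ENNReal.toReal_ofReal]
  · rw [stdNormalCDF, stdPDF_eq]
  · exact integral_nonneg fun t => gaussianPDFReal_nonneg _ _ _

lemma gauss_map (μ σ2 : ℝ) (hσ2 : 0 < σ2) :
    gaussianReal (-μ) ⟨1 + σ2, by positivity⟩ (Iic 0)
      = gaussianReal 0 1 (Iic (μ / Real.sqrt (1 + σ2))) := by
  have hτ : (0:ℝ) < 1 + σ2 := by positivity
  have hs : (0:ℝ) < Real.sqrt (1 + σ2) := Real.sqrt_pos.2 hτ
  have h1 : (gaussianReal 0 1).map (Real.sqrt (1 + σ2) * ·)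
      = gaussianReal 0 ⟨1 + σ2, hτ.le⟩ := by
    rw [gaussianReal_map_const_mul]
    congr 1
    · ring
    · ext
      simp [Real.sq_sqrt hτ.le]
      rfl
  have h2 : (gaussianReal 0 ⟨1 + σ2, hτ.le⟩).map (· + (-μ))
      = gaussianReal (-μ) ⟨1 + σ2, hτ.le⟩ := by
    erw [gaussianReal_map_add_const]
    congr 1
    ring
  rw [← h2, ← h1, Measure.map_map (by fun_prop) (by fun_prop),
    Measure.map_apply (by fun_prop) measurableSet_Iic]
  congr 1
  ext x
  simp only [Function.comp_apply, mem_preimage, mem_Iic]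
  rw [le_div_iff₀ hs]
  constructor <;> intro h <;> nlinarith

lemma inner_int (μ σ2 : ℝ) (hσ2 : 0 < σ2) (u : ℝ) :
    ∫ z, gaussianPDFReal μ ⟨σ2, hσ2.le⟩ z *
        ((Real.sqrt (2 * Real.pi))⁻¹ * Real.exp (-(u + z) ^ 2 / 2))
      = gaussianPDFReal (-μ) ⟨1 + σ2, by positivity⟩ u := by
  have hτ : (0:ℝ) < 1 + σ2 := by positivity
  have ha : (0:ℝ) < (1 + σ2) / (2 * σ2) := by positivity
  have hpi : (0:ℝ) < π := Real.pi_pos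
  have key : ∀ z : ℝ, gaussianPDFReal μ ⟨σ2, hσ2.le⟩ z *
      ((Real.sqrt (2 * Real.pi))⁻¹ * Real.exp (-(u + z) ^ 2 / 2))
      = ((Real.sqrt (2 * π * σ2))⁻¹ * (Real.sqrt (2 * π))⁻¹ *
          Real.exp (-(u + μ) ^ 2 / (2 * (1 + σ2)))) *
        Real.exp (-((1 + σ2) / (2 * σ2)) * (z - (μ - σ2 * u) / (1 + σ2)) ^ 2) := by
    intro z
    simp only [gaussianPDFReal, NNReal.coe_mk]
    show (√(2 * π * σ2))⁻¹ * rexp (-(z - μ) ^ 2 / (2 * σ2)) * ((√(2 * π))⁻¹ * rexp (-(u + z) ^ 2 / 2)) = _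
    rw [mul_mul_mul_comm, ← Real.exp_add,
      mul_assoc ((Real.sqrt (2 * π * σ2))⁻¹ * (Real.sqrt (2 * π))⁻¹), ← Real.exp_add]
    congr 1
    congr 1
    field_simp
    ring
  rw [funext key, integral_const_mul,
    integral_sub_right_eq_self
      (fun z : ℝ => Real.exp (-((1 + σ2) / (2 * σ2)) * z ^ 2)) ((μ - σ2 * u) / (1 + σ2)),
    integral_gaussian]
  show _ = (√(2 * π * (1 + σ2)))⁻¹ * rexp (-(u - -μ) ^ 2 / (2 * (1 + σ2)))
  have hc : (Real.sqrt (2 * π * σ2))⁻¹ * (Real.sqrt (2 * π))⁻¹ *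
      Real.sqrt (π / ((1 + σ2) / (2 * σ2))) = (Real.sqrt (2 * π * (1 + σ2)))⁻¹ := by
    rw [← Real.sqrt_inv, ← Real.sqrt_inv, ← Real.sqrt_inv, ← Real.sqrt_mul (by positivity),
      ← Real.sqrt_mul (by positivity)]
    congr 1
    field_simp
  rw [show u - -μ = u + μ from by ring, ← hc]
  ring

/-- If `z ∼ N(μ, σ²)` with `σ² > 0`, then `E[Φ(z)] = Φ(μ / √(1 + σ²))`. -/
theorem expectation_stdNormalCDF_gaussian (μ : ℝ) (σ2 : ℝ) (hσ2 : 0 < σ2) :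
    ∫ z, stdNormalCDF z ∂(gaussianReal μ ⟨σ2, hσ2.le⟩) =
      stdNormalCDF (μ / Real.sqrt (1 + σ2)) := by
  set v : ℝ≥0 := ⟨σ2, hσ2.le⟩ with hv
  have hvne : v ≠ 0 := by
    simp only [hv, ne_eq, ← NNReal.coe_eq_zero]
    exact fun h => hσ2.ne' (congrArg NNReal.toReal h)
  set φ : ℝ → ℝ := fun t => (Real.sqrt (2 * Real.pi))⁻¹ * Real.exp (-t ^ 2 / 2) with hφ
  set F : ℝ → ℝ≥0∞ := fun t => ENNReal.ofReal (φ t) with hF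
  have hFmeas : Measurable F := stdPDF_measurable.ennreal_ofReal
  -- step 1: to lintegral
  rw [integral_eq_lintegral_of_nonneg_ae (ae_of_all _ stdNormalCDF_nonneg)
    (stdNormalCDF_monotone.measurable.aestronglyMeasurable)]
  -- step 2: CDF as lintegral
  have h2 : ∀ z, ENNReal.ofReal (stdNormalCDF z) = ∫⁻ t in Iic z, F t := fun z => by
    rw [stdNormalCDF, ofReal_integral_eq_lintegral_ofReal stdPDF_integrable.restrict
      (ae_of_all _ fun t => stdPDF_nonneg t)]
  simp only [h2]
  -- step 3: withDensity
  have hinnermeas : Measurable fun z => ∫⁻ t in Iic z, F t :=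
    Monotone.measurable fun x y hxy =>
      lintegral_mono' (Measure.restrict_mono (Iic_subset_Iic.2 hxy) le_rfl) le_rfl
  rw [gaussianReal_of_var_ne_zero μ hvne,
    lintegral_withDensity_eq_lintegral_mul volume (measurable_gaussianPDF μ v) hinnermeas]
  -- step 4: shift the inner integral
  have h4 : ∀ z : ℝ, ∫⁻ t in Iic z, F t = ∫⁻ u in Iic 0, F (u + z) := by
    intro z
    rw [← lintegral_indicator measurableSet_Iic, ← lintegral_indicator measurableSet_Iic]
    have : (Iic (0:ℝ)).indicator (fun u => F (u + z)) = fun u => (Iic z).indicator F (u + z) := by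
      ext u
      by_cases h : u ≤ 0
      · simp [indicator_of_mem, h, mem_Iic, add_le_iff_nonpos_left.2 h,
          show u + z ≤ z from by linarith]
      · simp [indicator_of_notMem, h, mem_Iic, show ¬ u + z ≤ z from by
          intro hc; exact h (by linarith)]
    rw [this, lintegral_add_right_eq_self ((Iic z).indicator F) z]
  simp only [Pi.mul_apply, h4]
  -- step 5: pull the density inside
  have h5 : ∀ z : ℝ, gaussianPDF μ v z * ∫⁻ u in Iic 0, F (u + z)
      = ∫⁻ u in Iic 0, gaussianPDF μ v z * F (u + z) := fun z =>
    (lintegral_const_mul _ (hFmeas.comp (measurable_id.add_const z))).symm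
  simp only [h5]
  -- step 6: swap
  rw [lintegral_lintegral_swap]
  swap
  · exact (((measurable_gaussianPDF μ v).comp measurable_fst).mul
      (hFmeas.comp (measurable_snd.add measurable_fst))).aemeasurable
  -- step 7: inner gaussian integral
  have h7 : ∀ u : ℝ, ∫⁻ z, gaussianPDF μ v z * F (u + z)
      = ENNReal.ofReal (gaussianPDFReal (-μ) ⟨1 + σ2, by positivity⟩ u) := by
    intro u
    have heq : ∀ z : ℝ, gaussianPDF μ v z * F (u + z)
        = ENNReal.ofReal (gaussianPDFReal μ v z * φ (u + z)) := fun z => by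
      rw [ENNReal.ofReal_mul (gaussianPDFReal_nonneg _ _ _)]; rfl
    simp only [heq]
    have hint : Integrable (fun z => gaussianPDFReal μ v z * φ (u + z)) := by
      have := (integrable_gaussianPDFReal μ v).bdd_mul
        (f := fun z => φ (u + z)) ((stdPDF_measurable.comp (measurable_id.const_add u)).aestronglyMeasurable) (c := (Real.sqrt (2 * Real.pi))⁻¹) (ae_of_all _ fun z => by
          rw [Real.norm_eq_abs, abs_of_nonneg (stdPDF_nonneg _)]
          have : Real.exp (-(u + z) ^ 2 / 2) ≤ 1 := by
            apply Real.exp_le_one_iff.2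
            nlinarith [sq_nonneg (u + z)]
          have h0 : (0:ℝ) ≤ (Real.sqrt (2 * Real.pi))⁻¹ := by positivity
          calc (Real.sqrt (2 * Real.pi))⁻¹ * Real.exp (-(u + z) ^ 2 / 2)
              ≤ (Real.sqrt (2 * Real.pi))⁻¹ * 1 := by gcongr
            _ = (Real.sqrt (2 * Real.pi))⁻¹ := mul_one _)
      simpa [mul_comm] using this
    rw [← ofReal_integral_eq_lintegral_ofReal hint (ae_of_all _ fun z =>
      mul_nonneg (gaussianPDFReal_nonneg _ _ _) (stdPDF_nonneg _))]
    congr 1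
    exact inner_int μ σ2 hσ2 u
  simp only [h7]
  -- step 8: finish
  have h8 : ∀ u : ℝ, ENNReal.ofReal (gaussianPDFReal (-μ) ⟨1 + σ2, by positivity⟩ u)
      = gaussianPDF (-μ) ⟨1 + σ2, by positivity⟩ u := fun u => rfl
  simp only [h8]
  have hτne : (⟨1 + σ2, by positivity⟩ : ℝ≥0) ≠ 0 := by
    intro hcon
    have := congrArg (NNReal.toReal) hcon
    change (1 + σ2 : ℝ) = 0 at this
    nlinarith
  rw [← gaussianReal_apply (-μ) hτne (Iic 0), gauss_map μ σ2 hσ2,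
    ← stdNormalCDF_eq_measure]
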